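/- Rank comparison via a functional equation of generating functions: let f, g be formal power series over ℝ and α, β, γ ∈ ℝ with f(0) ≠ α, g(0) ≠ 0, and f·g = α·g + β·x·g + γ (as formal power series). Then for every d ∈ ℕ, rank(H[f]^{(d,d)}) ≥ rank(H[g]^{(d,d)}) − 3, where H[h]^{(d,d)} is the (d+1)×(d+1) Hankel matrix of the coefficients of h. -/

import Mathlib

open Finset Matrix


noncomputable def hankel (d : ℕ) (h : PowerSeries ℝ) : Matrix (Fin (d + 1)) (Fin (d + 1)) ℝ :=
  Matrix.of fun i j => PowerSeries.coeff ((i : ℕ) + j) h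


namespace HankelAux


def w (G : ℕ → ℝ) (n : ℕ) : ℝ := if n = 0 then 0 else G (n - 1)

def Cc (G : ℕ → ℝ) (α β γ : ℝ) (n : ℕ) : ℝ :=
  α * G n + β * w G n + (if n = 0 then γ else 0)

lemma star2 (G : ℕ → ℝ) (i j : ℕ) :
    ∑ a ∈ range (i + 1), (G (i - a) * w G (a + j) - w G (i - a) * G (j + a))
      = G i * w G j := by
  rw [Finset.sum_sub_distrib]
  have hA : ∑ a ∈ range (i + 1), G (i - a) * w G (a + j)
      = (∑ a ∈ range i, G (i - 1 - a) * G (j + a)) + G i * w G j := by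
    rw [Finset.sum_range_succ']
    congr 1
    · refine Finset.sum_congr rfl fun a _ => ?_
      have h1 : i - (a + 1) = i - 1 - a := by omega
      have h2 : w G (a + 1 + j) = G (j + a) := by
        have hne : a + 1 + j ≠ 0 := by omega
        have he : a + 1 + j - 1 = j + a := by omega
        simp [w, hne, he]
      rw [h1, h2]
    · simp
  have hB : ∑ a ∈ range (i + 1), w G (i - a) * G (j + a)
      = ∑ a ∈ range i, G (i - 1 - a) * G (j + a) := by
    rw [Finset.sum_range_succ]
    have h0 : w G (i - i) = 0 := by simp [w]
    rw [h0, zero_mul, add_zero]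
    refine Finset.sum_congr rfl fun a ha => ?_
    have ha' := Finset.mem_range.1 ha
    have hne : i - a ≠ 0 := by omega
    have he : i - a - 1 = i - 1 - a := by omega
    simp [w, hne, he]
  rw [hA, hB]
  ring

lemma tri (G F : ℕ → ℝ) (i j : ℕ) :
    ∑ a ∈ range (i + 1), ∑ k ∈ range a, G (i - a) * F k * G (a + j - k)
      = ∑ c ∈ range i, ∑ k ∈ range (i - c), G (j + c + 1) * F k * G (i - 1 - c - k) := by
  rw [Finset.sum_sigma', Finset.sum_sigma']
  refine Finset.sum_nbij' (fun p => ⟨p.1 - p.2 - 1, p.2⟩) (fun p => ⟨p.1 + p.2 + 1, p.2⟩)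
    ?_ ?_ ?_ ?_ ?_
  · rintro ⟨a, k⟩ hp
    simp only [Finset.mem_sigma, Finset.mem_range] at hp ⊢
    omega
  · rintro ⟨c, k⟩ hp
    simp only [Finset.mem_sigma, Finset.mem_range] at hp ⊢
    omega
  · rintro ⟨a, k⟩ hp
    simp only [Finset.mem_sigma, Finset.mem_range] at hp
    have h : a - k - 1 + k + 1 = a := by omega
    simp [h]
  · rintro ⟨c, k⟩ hp
    simp only [Finset.mem_sigma, Finset.mem_range] at hp
    have h : c + k + 1 - k - 1 = c := by omega
    simp [h]
  · rintro ⟨a, k⟩ hp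
    simp only [Finset.mem_sigma, Finset.mem_range] at hp
    obtain ⟨ha, hk⟩ := hp
    have e1 : j + (a - k - 1) + 1 = a + j - k := by omega
    have e2 : i - 1 - (a - k - 1) - k = i - a := by omega
    simp only [e1, e2]
    ring

lemma key (F G : ℕ → ℝ) (α β γ : ℝ)
    (hC : ∀ n, ∑ k ∈ range (n + 1), F k * G (n - k) = Cc G α β γ n) (i j : ℕ) :
    γ * G (i + j)
      + ∑ a ∈ range (i + 1), ∑ b ∈ range (j + 1), G (i - a) * F (a + b) * G (j - b)
      = G i * Cc G α β γ j + (Cc G α β γ i - α * G i) * G j := by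
  -- inner split
  have h1 : ∀ a, ∑ b ∈ range (j + 1), F (a + b) * G (j - b)
      = Cc G α β γ (a + j) - ∑ k ∈ range a, F k * G (a + j - k) := by
    intro a
    have h := hC (a + j)
    rw [show a + j + 1 = a + (j + 1) by omega, Finset.sum_range_add] at h
    have he : ∀ b, a + j - (a + b) = j - b := fun b => by omega
    simp only [he] at h
    linarith
  have h2 : ∑ a ∈ range (i + 1), ∑ b ∈ range (j + 1), G (i - a) * F (a + b) * G (j - b)
      = ∑ a ∈ range (i + 1),
          (G (i - a) * Cc G α β γ (a + j) - ∑ k ∈ range a, G (i - a) * F k * G (a + j - k)) := by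
    refine Finset.sum_congr rfl fun a _ => ?_
    have : ∑ b ∈ range (j + 1), G (i - a) * F (a + b) * G (j - b)
        = G (i - a) * ∑ b ∈ range (j + 1), F (a + b) * G (j - b) := by
      rw [Finset.mul_sum]
      exact Finset.sum_congr rfl fun b _ => by ring
    rw [this, h1 a, mul_sub, Finset.mul_sum]
    congr 1
    exact Finset.sum_congr rfl fun k _ => by ring
  have h3 : ∑ c ∈ range i, ∑ k ∈ range (i - c), G (j + c + 1) * F k * G (i - 1 - c - k)
      = ∑ c ∈ range i, G (j + c + 1) * Cc G α β γ (i - 1 - c) := by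
    refine Finset.sum_congr rfl fun c hc => ?_
    have hci := Finset.mem_range.1 hc
    have hr : i - c = (i - 1 - c) + 1 := by omega
    rw [← hC (i - 1 - c), hr, Finset.mul_sum]
    refine Finset.sum_congr rfl fun k _ => by ring
  have h4 : ∑ a ∈ range (i + 1), Cc G α β γ (i - a) * G (j + a)
      = (∑ c ∈ range i, G (j + c + 1) * Cc G α β γ (i - 1 - c)) + Cc G α β γ i * G j := by
    rw [Finset.sum_range_succ']
    congr 1
    · refine Finset.sum_congr rfl fun c _ => ?_
      have e1 : i - (c + 1) = i - 1 - c := by omega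
      have e2 : j + (c + 1) = j + c + 1 := by omega
      rw [e1, e2]; ring
  -- the antisymmetric difference
  have hD : ∑ a ∈ range (i + 1), (G (i - a) * Cc G α β γ (a + j) - Cc G α β γ (i - a) * G (j + a))
      = β * (G i * w G j) + γ * ((if j = 0 then G i else 0) - G (i + j)) := by
    have expand : ∀ a ∈ range (i + 1),
        G (i - a) * Cc G α β γ (a + j) - Cc G α β γ (i - a) * G (j + a)
        = β * (G (i - a) * w G (a + j) - w G (i - a) * G (j + a))
          + γ * ((if a + j = 0 then G (i - a) else 0) - (if i - a = 0 then G (j + a) else 0)) := by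
      intro a ha
      have hGc : G (a + j) = G (j + a) := by rw [add_comm]
      simp only [Cc, hGc]
      split_ifs <;> ring
    rw [Finset.sum_congr rfl expand, Finset.sum_add_distrib, ← Finset.mul_sum, ← Finset.mul_sum,
      star2]
    have hγ1 : ∑ a ∈ range (i + 1), ((if a + j = 0 then G (i - a) else 0)
        - (if i - a = 0 then G (j + a) else 0))
        = (if j = 0 then G i else 0) - G (i + j) := by
      rw [Finset.sum_sub_distrib]
      have e1 : ∑ a ∈ range (i + 1), (if a + j = 0 then G (i - a) else 0)
          = if j = 0 then G i else 0 := by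
        rw [Finset.sum_eq_single_of_mem 0 (Finset.mem_range.2 (by omega))]
        · simp
        · intro b hb hbne
          have : b + j ≠ 0 := by omega
          simp [this, hbne]
      have e2 : ∑ a ∈ range (i + 1), (if i - a = 0 then G (j + a) else 0) = G (i + j) := by
        rw [Finset.sum_eq_single_of_mem i (Finset.mem_range.2 (by omega))]
        · simp [add_comm]
        · intro b hb hbne
          have hb' := Finset.mem_range.1 hb
          have : i - b ≠ 0 := by omega
          simp [this]
      rw [e1, e2]
    rw [hγ1]
  have h6 : ∑ c ∈ range i, G (j + c + 1) * Cc G α β γ (i - 1 - c)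
      = (∑ a ∈ range (i + 1), Cc G α β γ (i - a) * G (j + a)) - Cc G α β γ i * G j := by
    rw [h4]; ring
  have h7 : (∑ a ∈ range (i + 1), G (i - a) * Cc G α β γ (a + j))
      - ∑ a ∈ range (i + 1), Cc G α β γ (i - a) * G (j + a)
      = β * (G i * w G j) + γ * ((if j = 0 then G i else 0) - G (i + j)) := by
    rw [← Finset.sum_sub_distrib, hD]
  rw [h2, Finset.sum_sub_distrib, tri, h3, h6]
  simp only [Cc, w] at h7 ⊢
  split_ifs at h7 ⊢ <;> linear_combination h7



lemma rank_add_le {n : ℕ} (A B : Matrix (Fin n) (Fin n) ℝ) :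
    (A + B).rank ≤ A.rank + B.rank := by
  classical
  rw [Matrix.rank, Matrix.rank, Matrix.rank, Matrix.mulVecLin_add]
  have hle : LinearMap.range (A.mulVecLin + B.mulVecLin)
      ≤ LinearMap.range A.mulVecLin ⊔ LinearMap.range B.mulVecLin := by
    rintro x ⟨y, rfl⟩
    exact Submodule.mem_sup.2 ⟨A.mulVecLin y, LinearMap.mem_range_self _ y,
      B.mulVecLin y, LinearMap.mem_range_self _ y, rfl⟩
  exact (Submodule.finrank_mono hle).trans
    (Submodule.finrank_add_le_finrank_add_finrank _ _)

lemma rank_smul_le {n : ℕ} (c : ℝ) (A : Matrix (Fin n) (Fin n) ℝ) :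
    (c • A).rank ≤ A.rank := by
  rw [Matrix.smul_eq_diagonal_mul]
  exact Matrix.rank_mul_le_right _ _

lemma rank_vmv_le {n : ℕ} (u v : Fin n → ℝ) : (Matrix.vecMulVec u v).rank ≤ 1 := by
  rw [Matrix.vecMulVec_eq (Fin 1)]
  exact (Matrix.rank_mul_le_left _ _).trans
    ((Matrix.rank_le_card_width _).trans (by simp))

lemma fin_sum_ite {d : ℕ} (i : Fin (d + 1)) (h : ℕ → ℝ) :
    ∑ a : Fin (d + 1), (if (a : ℕ) ≤ (i : ℕ) then h (a : ℕ) else 0)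
      = ∑ a ∈ range ((i : ℕ) + 1), h a := by
  rw [Fin.sum_univ_eq_sum_range (fun a => if a ≤ (i : ℕ) then h a else 0) (d + 1)]
  rw [← Finset.sum_subset (Finset.range_subset_range.2 (show (i : ℕ) + 1 ≤ d + 1 by omega))
    (fun x hx hnx => by
      simp only [Finset.mem_range] at hx hnx
      rw [if_neg (by omega)])]
  refine Finset.sum_congr rfl fun a ha => ?_
  have := Finset.mem_range.1 ha
  rw [if_pos (by omega)]

lemma fin_sum_ite2 {d : ℕ} (i j : Fin (d + 1)) (h : ℕ → ℕ → ℝ) :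
    (∑ a : Fin (d + 1), ∑ b : Fin (d + 1),
      (if (a : ℕ) ≤ (i : ℕ) ∧ (b : ℕ) ≤ (j : ℕ) then h a b else 0))
      = ∑ a ∈ range ((i : ℕ) + 1), ∑ b ∈ range ((j : ℕ) + 1), h a b := by
  have step : ∀ a : Fin (d + 1),
      (∑ b : Fin (d + 1), (if (a : ℕ) ≤ (i : ℕ) ∧ (b : ℕ) ≤ (j : ℕ) then h a b else 0))
      = (if (a : ℕ) ≤ (i : ℕ) then (∑ b ∈ range ((j : ℕ) + 1), h a b) else 0) := by
    intro a
    by_cases ha : (a : ℕ) ≤ (i : ℕ)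
    · simp only [ha, true_and, if_true]
      exact fin_sum_ite j (fun b => h a b)
    · simp [ha]
  rw [Finset.sum_congr rfl fun a _ => step a]
  exact fin_sum_ite i (fun a => ∑ b ∈ range ((j : ℕ) + 1), h a b)


end HankelAux


open HankelAux in
theorem hankel_rank_comparison (f g : PowerSeries ℝ) (α β γ : ℝ)
    (hf : PowerSeries.coeff 0 f ≠ α) (hg : PowerSeries.coeff 0 g ≠ 0)
    (heq : f * g = PowerSeries.C α * g + PowerSeries.C β * PowerSeries.X * g
      + PowerSeries.C γ) (d : ℕ) :
    (hankel d g).rank ≤ (hankel d f).rank + 3 := by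
  classical
  set F : ℕ → ℝ := fun n => PowerSeries.coeff n f with hF
  set G : ℕ → ℝ := fun n => PowerSeries.coeff n g with hG
  have hC : ∀ n, ∑ k ∈ range (n + 1), F k * G (n - k) = Cc G α β γ n := by
    intro n
    have h := congrArg (PowerSeries.coeff n) heq
    rw [PowerSeries.coeff_mul, Finset.Nat.sum_antidiagonal_eq_sum_range_succ_mk,
      mul_assoc] at h
    simp only [map_add, PowerSeries.coeff_C_mul, PowerSeries.coeff_C] at h
    cases n with
    | zero =>
      rw [PowerSeries.coeff_zero_X_mul] at h
      simpa [Cc, w, hF, hG] using h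
    | succ m =>
      rw [PowerSeries.coeff_succ_X_mul] at h
      simpa [Cc, w, hF, hG] using h
  have hγ : γ ≠ 0 := by
    have h0 := hC 0
    simp [Cc, w] at h0
    intro hzero
    rw [hzero] at h0
    rcases mul_eq_mul_right_iff.1 (h0.trans (by ring : α * G 0 + 0 = α * G 0)) with h | h
    · exact hf h
    · exact hg h
  set L : Matrix (Fin (d + 1)) (Fin (d + 1)) ℝ :=
    Matrix.of (fun i j => if (j : ℕ) ≤ (i : ℕ) then G ((i : ℕ) - (j : ℕ)) else 0) with hL
  set v : Fin (d + 1) → ℝ := fun i => G (i : ℕ) with hv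
  set s : Fin (d + 1) → ℝ := fun j => Cc G α β γ (j : ℕ) with hs
  set t : Fin (d + 1) → ℝ := fun i => Cc G α β γ (i : ℕ) - α * G (i : ℕ) with ht
  have entry : ∀ i j : Fin (d + 1), (L * hankel d f * Lᵀ) i j
      = ∑ a ∈ range ((i : ℕ) + 1), ∑ b ∈ range ((j : ℕ) + 1),
          G ((i : ℕ) - a) * F (a + b) * G ((j : ℕ) - b) := by
    intro i j
    rw [← fin_sum_ite2 i j (fun a b => G ((i : ℕ) - a) * F (a + b) * G ((j : ℕ) - b))]
    rw [Matrix.mul_apply]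
    simp only [Matrix.mul_apply, Finset.sum_mul]
    rw [Finset.sum_comm]
    refine Finset.sum_congr rfl fun a _ => Finset.sum_congr rfl fun b _ => ?_
    show (if (a : ℕ) ≤ (i : ℕ) then G ((i : ℕ) - (a : ℕ)) else 0)
        * PowerSeries.coeff ((a : ℕ) + (b : ℕ)) f
        * (if (b : ℕ) ≤ (j : ℕ) then G ((j : ℕ) - (b : ℕ)) else 0) = _
    by_cases ha : (a : ℕ) ≤ (i : ℕ) <;> by_cases hb : (b : ℕ) ≤ (j : ℕ) <;>
      simp [ha, hb, hF]
  have hmat : γ • hankel d g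
      = Matrix.vecMulVec v s + Matrix.vecMulVec t v - L * hankel d f * Lᵀ := by
    ext i j
    have hk := key F G α β γ hC (i : ℕ) (j : ℕ)
    rw [← entry i j] at hk
    simp only [Matrix.smul_apply, Matrix.sub_apply, Matrix.add_apply,
      Matrix.vecMulVec_apply, smul_eq_mul]
    have hgg : hankel d g i j = G ((i : ℕ) + (j : ℕ)) := rfl
    rw [hgg]
    have hk' : γ * G ((i : ℕ) + (j : ℕ)) + (L * hankel d f * Lᵀ) i j
        = v i * s j + t i * v j := hk
    linarith [hk']
  have step1 : (hankel d g).rank ≤ (γ • hankel d g).rank := by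
    have h8 : hankel d g = γ⁻¹ • (γ • hankel d g) := by
      rw [smul_smul, inv_mul_cancel₀ hγ, one_smul]
    calc (hankel d g).rank = (γ⁻¹ • (γ • hankel d g)).rank := by rw [← h8]
      _ ≤ (γ • hankel d g).rank := rank_smul_le _ _
  have step2 : (γ • hankel d g).rank ≤ (hankel d f).rank + 2 := by
    rw [hmat]
    have e1 : Matrix.vecMulVec v s + Matrix.vecMulVec t v - L * hankel d f * Lᵀ
        = Matrix.vecMulVec v s + (Matrix.vecMulVec t v + (-1 : ℝ) • (L * hankel d f * Lᵀ)) := by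
      rw [neg_one_smul, sub_eq_add_neg, add_assoc]
    rw [e1]
    have b1 := rank_vmv_le v s
    have b2 := rank_vmv_le t v
    have b3 : ((-1 : ℝ) • (L * hankel d f * Lᵀ)).rank ≤ (hankel d f).rank :=
      (rank_smul_le _ _).trans ((Matrix.rank_mul_le_left _ _).trans
        (Matrix.rank_mul_le_right _ _))
    have := rank_add_le (Matrix.vecMulVec v s)
      (Matrix.vecMulVec t v + (-1 : ℝ) • (L * hankel d f * Lᵀ))
    have := rank_add_le (Matrix.vecMulVec t v) ((-1 : ℝ) • (L * hankel d f * Lᵀ))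
    omega
  omega
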